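/- Let (V, b) be a finite-dimensional symplectic vector space over an algebraically closed field K of characteristic 2, with dim V = 2ℓ, ℓ ≥ 1, and let φ : S²(V) → K be the linear map determined by φ(xy) = b(x, y). Then ker φ is isomorphic, as an Sp(V)-module, to the dual of the quotient Lie algebra sp(V)/Z(sp(V)): there exists a K-linear bijection Θ : ker φ → (sp(V)/Z(sp(V)))* such that Θ(g̃ s)(X + Z(sp(V))) = Θ(s)(g⁻¹Xg + Z(sp(V))) for all g ∈ Sp(V), all s ∈ ker φ and all X ∈ sp(V). -/

import Mathlib

open scoped TensorProduct

/-- The symmetric square `S²(V)`: the quotient of `V ⊗ V` by the span of all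
`x ⊗ y - y ⊗ x`. -/
noncomputable abbrev SymSq (K V : Type*) [Field K] [AddCommGroup V] [Module K V] : Type _ :=
  TensorProduct K V V ⧸
    Submodule.span K {z : TensorProduct K V V | ∃ x y : V, z = x ⊗ₜ[K] y - y ⊗ₜ[K] x}

/-- The product `xy` in the symmetric square, i.e. the image of `x ⊗ y`. -/
noncomputable def SymSq.mul {K V : Type*} [Field K] [AddCommGroup V] [Module K V]
    (x y : V) : SymSq K V :=
  Submodule.Quotient.mk (x ⊗ₜ[K] y)

/-- The symplectic Lie algebra `sp(V)` of a bilinear form `b`: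
all `X` with `b(Xv, w) + b(v, Xw) = 0`, as a submodule of `End(V)`. -/
def spSub (K V : Type*) [Field K] [AddCommGroup V] [Module K V]
    (b : V →ₗ[K] V →ₗ[K] K) : Submodule K (Module.End K V) where
  carrier := {X | ∀ v w : V, b (X v) w + b v (X w) = 0}
  add_mem' := by
    intro X Y hX hY v w
    have h1 := hX v w
    have h2 := hY v w
    simp only [LinearMap.add_apply, map_add] at *
    linear_combination h1 + h2
  zero_mem' := by
    intro v w
    simp
  smul_mem' := by
    intro c X hX v w
    have h := hX v w
    simp only [LinearMap.smul_apply, map_smul, smul_eq_mul] at *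
    linear_combination c * h

section Helpers

variable {K V : Type*} [Field K] [AddCommGroup V] [Module K V]

lemma SymSq.mul_comm' (x y : V) : SymSq.mul (K := K) x y = SymSq.mul y x := by
  unfold SymSq.mul
  rw [Submodule.Quotient.eq]
  exact Submodule.subset_span ⟨x, y, rfl⟩

lemma SymSq.hom_ext {W : Type*} [AddCommGroup W] [Module K W] {f g : SymSq K V →ₗ[K] W}
    (H : ∀ x y : V, f (SymSq.mul x y) = g (SymSq.mul x y)) : f = g := by
  apply LinearMap.ext
  intro s
  obtain ⟨t, rfl⟩ := Submodule.Quotient.mk_surjective _ s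
  induction t with
  | zero =>
      rw [show (Submodule.Quotient.mk (0 : TensorProduct K V V) : SymSq K V) = 0 from rfl]
      simp
  | tmul x y => exact H x y
  | add a c ha hc =>
      rw [show (Submodule.Quotient.mk (a + c) : SymSq K V)
          = Submodule.Quotient.mk a + Submodule.Quotient.mk c from rfl]
      rw [map_add, map_add, ha, hc]

/-- Lift of a symmetric bilinear form to the symmetric square. -/
noncomputable def sqLift (β : V →ₗ[K] V →ₗ[K] K) (hβ : ∀ v w : V, β v w = β w v) :
    SymSq K V →ₗ[K] K :=
  Submodule.liftQ _ (TensorProduct.lift β) (by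
    rw [Submodule.span_le]
    rintro z ⟨x, y, rfl⟩
    simp only [SetLike.mem_coe, LinearMap.mem_ker, map_sub, TensorProduct.lift.tmul]
    rw [hβ x y, sub_self])

@[simp] lemma sqLift_mul (β : V →ₗ[K] V →ₗ[K] K) (hβ : ∀ v w : V, β v w = β w v) (x y : V) :
    sqLift β hβ (SymSq.mul x y) = β x y := by
  simp [sqLift, SymSq.mul]

end Helpers

section Sp

variable {K V : Type*} [Field K] [AddCommGroup V] [Module K V]
  (b : V →ₗ[K] V →ₗ[K] K)

/-- The map `sp(V) → (S²V)*`, `X ↦ (xy ↦ b(Xx, y))`. -/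
noncomputable def spToDual (hsp : ∀ X ∈ spSub K V b, ∀ v w : V, b (X v) w = b (X w) v) :
    ↥(spSub K V b) →ₗ[K] Module.Dual K (SymSq K V) where
  toFun X := sqLift (b ∘ₗ X.1) (fun v w => hsp X.1 X.2 v w)
  map_add' X Y := SymSq.hom_ext (fun x y => by
    simp [LinearMap.add_apply, map_add])
  map_smul' c X := SymSq.hom_ext (fun x y => by
    simp)

@[simp] lemma spToDual_mul (hsp : ∀ X ∈ spSub K V b, ∀ v w : V, b (X v) w = b (X w) v)
    (X : ↥(spSub K V b)) (x y : V) :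
    spToDual b hsp X (SymSq.mul x y) = b (X.1 x) y := by
  simp [spToDual]

end Sp

section Bij

variable {K V : Type*} [Field K] [AddCommGroup V] [Module K V]
  (b : V →ₗ[K] V →ₗ[K] K)

lemma SymSq.add_mul' (x x' y : V) :
    SymSq.mul (K := K) (x + x') y = SymSq.mul x y + SymSq.mul x' y := by
  unfold SymSq.mul
  rw [TensorProduct.add_tmul, Submodule.Quotient.mk_add]

lemma SymSq.mul_add' (x y y' : V) :
    SymSq.mul (K := K) x (y + y') = SymSq.mul x y + SymSq.mul x y' := by
  unfold SymSq.mul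
  rw [TensorProduct.tmul_add, Submodule.Quotient.mk_add]

lemma SymSq.smul_mul' (c : K) (x y : V) :
    SymSq.mul (c • x) y = c • SymSq.mul (K := K) x y := by
  unfold SymSq.mul
  rw [← TensorProduct.smul_tmul', Submodule.Quotient.mk_smul]

lemma SymSq.mul_smul' (c : K) (x y : V) :
    SymSq.mul x (c • y) = c • SymSq.mul (K := K) x y := by
  unfold SymSq.mul
  rw [TensorProduct.tmul_smul, Submodule.Quotient.mk_smul]

lemma spToDual_bijective [FiniteDimensional K V]
    (hnd : ∀ v : V, (∀ w : V, b v w = 0) → v = 0)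
    (hsym : ∀ v w : V, b v w = b w v)
    (h2 : ∀ a : K, a + a = 0)
    (hsp : ∀ X ∈ spSub K V b, ∀ v w : V, b (X v) w = b (X w) v) :
    Function.Bijective (spToDual b hsp) := by
  constructor
  · intro X Y hXY
    apply Subtype.ext
    apply LinearMap.ext
    intro v
    rw [← sub_eq_zero, ← LinearMap.sub_apply]
    apply hnd
    intro w
    have h := congrArg (fun f => f (SymSq.mul v w)) hXY
    simp only [spToDual_mul] at h
    simp [h]
  · intro f
    set β : V →ₗ[K] V →ₗ[K] K := LinearMap.mk₂ K (fun v w => f (SymSq.mul v w))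
      (fun x x' y => by
        show f (SymSq.mul (x + x') y) = f (SymSq.mul x y) + f (SymSq.mul x' y)
        rw [SymSq.add_mul', map_add])
      (fun c x y => by
        show f (SymSq.mul (c • x) y) = c • f (SymSq.mul x y)
        rw [SymSq.smul_mul', map_smul])
      (fun x y y' => by
        show f (SymSq.mul x (y + y')) = f (SymSq.mul x y) + f (SymSq.mul x y')
        rw [SymSq.mul_add', map_add])
      (fun c x y => by
        show f (SymSq.mul x (c • y)) = c • f (SymSq.mul x y)
        rw [SymSq.mul_smul', map_smul]) with hβ
    have hβapp : ∀ v w : V, β v w = f (SymSq.mul v w) := fun v w => rfl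
    set M' : Module.End K V →ₗ[K] (V →ₗ[K] V →ₗ[K] K) :=
      LinearMap.llcomp K V V (V →ₗ[K] K) b with hM'
    have hM'app : ∀ (X : Module.End K V) (v : V), M' X v = b (X v) := fun X v => rfl
    have hMinj : Function.Injective M' := by
      intro X Y h
      apply LinearMap.ext
      intro v
      rw [← sub_eq_zero, ← LinearMap.sub_apply]
      apply hnd
      intro w
      have h' := congrArg (fun F => F v w) h
      simp only [hM'app] at h'
      simp [h']
    have hrange : LinearMap.range M' = ⊤ := by
      refine Submodule.eq_top_of_finrank_eq (K := K) (V := V →ₗ[K] V →ₗ[K] K) ?_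
      rw [LinearMap.finrank_range_of_inj hMinj]
      rw [Module.finrank_linearMap, Module.finrank_linearMap, Module.finrank_linearMap,
        Module.finrank_self]
      ring
    obtain ⟨X, hX⟩ := LinearMap.range_eq_top.mp hrange β
    have hXapp : ∀ v w : V, b (X v) w = f (SymSq.mul v w) := by
      intro v w
      rw [← hβapp, ← hX]
      rfl
    have hXsp : X ∈ spSub K V b := by
      intro v w
      rw [hXapp v w, hsym v (X w), hXapp w v, SymSq.mul_comm' w v]
      exact h2 _
    refine ⟨⟨X, hXsp⟩, SymSq.hom_ext (fun x y => ?_)⟩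
    rw [spToDual_mul]
    exact hXapp x y

end Bij


/-- `ker φ ≅ (sp(V)/Z(sp(V)))*` as `Sp(V)`-modules, where `φ : S²(V) → K` is determined by
`φ(xy) = b(x,y)` and `Z(sp(V))` is the span of the identity. The compatibility
`Θ(g̃ s)(X + Z) = Θ(s)(g⁻¹Xg + Z)` is encoded by quantifying over `s' = g̃ s` and over
`Y = g⁻¹Xg`, the latter as `X ∘ g = g ∘ Y`. -/
theorem stmt6 (K : Type*) [Field K] [IsAlgClosed K] [CharP K 2]
    (V : Type*) [AddCommGroup V] [Module K V] [FiniteDimensional K V]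
    (ℓ : ℕ) (hl : 1 ≤ ℓ) (hdim : Module.finrank K V = 2 * ℓ)
    (b : V →ₗ[K] V →ₗ[K] K)
    (halt : ∀ v : V, b v v = 0)
    (hnd : ∀ v : V, (∀ w : V, b v w = 0) → v = 0)
    (h1 : (1 : Module.End K V) ∈ spSub K V b)
    (φ : SymSq K V →ₗ[K] K)
    (hφ : ∀ x y : V, φ (SymSq.mul x y) = b x y) :
    ∃ Θ : ↥(LinearMap.ker φ) ≃ₗ[K]
        Module.Dual K
          (↥(spSub K V b) ⧸ Submodule.span K {(⟨1, h1⟩ : ↥(spSub K V b))}),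
      ∀ g : V ≃ₗ[K] V, (∀ v w : V, b (g v) (g w) = b v w) →
        ∀ gt : Module.End K (SymSq K V),
          (∀ x y : V, gt (SymSq.mul x y) = SymSq.mul (g x) (g y)) →
        ∀ s s' : ↥(LinearMap.ker φ), (↑s' : SymSq K V) = gt ↑s →
        ∀ X Y : ↥(spSub K V b),
          (↑X : Module.End K V) ∘ₗ (↑g : V →ₗ[K] V)
            = (↑g : V →ₗ[K] V) ∘ₗ (↑Y : Module.End K V) →
          Θ s' (Submodule.Quotient.mk X) = Θ s (Submodule.Quotient.mk Y) := by
  classical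
  have h2 : ∀ a : K, a + a = 0 := fun a => CharTwo.add_self_eq_zero a
  have hsym : ∀ v w : V, b v w = b w v := by
    intro v w
    have h := halt (v + w)
    simp only [map_add, LinearMap.add_apply, halt, zero_add, add_zero] at h
    linear_combination h - h2 (b w v)
  have hsp : ∀ X ∈ spSub K V b, ∀ v w : V, b (X v) w = b (X w) v := by
    intro X hX v w
    have h := hX v w
    have h' := hsym v (X w)
    linear_combination h - h' - h2 (b (X w) v)
  have hbij := spToDual_bijective b hnd hsym h2 hsp
  let E : ↥(spSub K V b) ≃ₗ[K] Module.Dual K (SymSq K V) :=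
    LinearEquiv.ofBijective (spToDual b hsp) hbij
  let Ψ : SymSq K V ≃ₗ[K] Module.Dual K ↥(spSub K V b) :=
    (Module.evalEquiv K (SymSq K V)).trans E.dualMap
  have hΨ : ∀ (s : SymSq K V) (X : ↥(spSub K V b)), Ψ s X = spToDual b hsp X s := by
    intro s X
    rfl
  set c : ↥(spSub K V b) := ⟨1, h1⟩ with hc
  have hφc : spToDual b hsp c = φ := by
    apply SymSq.hom_ext
    intro x y
    rw [spToDual_mul, hφ]
    rfl
  have hΨc : ∀ s : SymSq K V, Ψ s c = φ s := fun s => by rw [hΨ, hφc]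
  set Z : Submodule K ↥(spSub K V b) := Submodule.span K {c} with hZ
  set dmap : Module.Dual K (↥(spSub K V b) ⧸ Z) →ₗ[K] Module.Dual K ↥(spSub K V b) :=
    Z.mkQ.dualMap with hdmap
  have hdinj : Function.Injective dmap :=
    LinearMap.dualMap_injective_of_surjective (Submodule.mkQ_surjective Z)
  have hrange : LinearMap.range dmap = Z.dualAnnihilator := Submodule.range_dualMap_mkQ_eq Z
  have hkermap : Submodule.map (Ψ : SymSq K V →ₗ[K] Module.Dual K ↥(spSub K V b))
      (LinearMap.ker φ) = Z.dualAnnihilator := by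
    ext f
    simp only [Submodule.mem_map, LinearMap.mem_ker, Submodule.mem_dualAnnihilator,
      LinearEquiv.coe_coe]
    constructor
    · rintro ⟨s, hs, rfl⟩ w hw
      obtain ⟨a, rfl⟩ := Submodule.mem_span_singleton.mp hw
      rw [map_smul, smul_eq_mul, hΨc s, hs, mul_zero]
    · intro hf
      refine ⟨Ψ.symm f, ?_, Ψ.apply_symm_apply f⟩
      have hfc : f c = 0 := hf c (Submodule.mem_span_singleton_self c)
      rw [← hΨc (Ψ.symm f), Ψ.apply_symm_apply]
      exact hfc
  let Θ : ↥(LinearMap.ker φ) ≃ₗ[K] Module.Dual K (↥(spSub K V b) ⧸ Z) :=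
    ((Ψ.submoduleMap (LinearMap.ker φ)).trans
      (LinearEquiv.ofEq _ _ (hkermap.trans hrange.symm))).trans
      (LinearEquiv.ofInjective dmap hdinj).symm
  refine ⟨Θ, ?_⟩
  have hΘ : ∀ (s : ↥(LinearMap.ker φ)) (W : ↥(spSub K V b)),
      Θ s (Submodule.Quotient.mk W) = Ψ (↑s : SymSq K V) W := by
    intro s W
    have e1 : dmap (Θ s) = Ψ (↑s : SymSq K V) := by
      have h3 : (LinearEquiv.ofInjective dmap hdinj) (Θ s)
          = ((Ψ.submoduleMap (LinearMap.ker φ)).trans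
              (LinearEquiv.ofEq _ _ (hkermap.trans hrange.symm))) s := by
        simp only [Θ, LinearEquiv.trans_apply, LinearEquiv.apply_symm_apply]
      have h4 := congrArg Subtype.val h3
      rw [LinearEquiv.ofInjective_apply] at h4
      rw [h4]
      simp [LinearEquiv.submoduleMap_apply]
    rw [← e1]
    rfl
  intro g hg gt hgt s s' hs' X Y hXY
  rw [hΘ s' X, hΘ s Y, hs', hΨ, hΨ]
  have key : (spToDual b hsp X) ∘ₗ gt = spToDual b hsp Y := by
    apply SymSq.hom_ext
    intro v w
    rw [LinearMap.comp_apply, hgt, spToDual_mul, spToDual_mul]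
    have hc2 : X.1 (g v) = g (Y.1 v) := by
      have := LinearMap.congr_fun hXY v
      simpa using this
    rw [hc2]
    exact hg (Y.1 v) w
  exact LinearMap.congr_fun key (↑s : SymSq K V)
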